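/- Let V be a finite set with |V| ≥ 2, let L ≥ 1, and let S ⊆ ⋃_{j=1}^{L} V^j with |S| < |V|^L − 1. Then there exist two probability distributions p and p′ on Y = V^L such that: (i) for every string w·u ∈ S (with w ∈ V^{j−1}, u ∈ V), both p and p′ assign conditional next-token probability p(u|w) = p′(u|w) = 1/|V|; and (ii) the set of sequences of maximum p-probability is disjoint from the set of sequences of maximum p′-probability. Hence an algorithm that queries only the conditional probabilities indexed by S cannot output a maximum-probability sequence (the optimal output for the L-gram Hamming, i.e. 0-1, loss) under both p and p′. -/

import Mathlib

/- prefixProb p w = P_{z∼p}(w is a prefix of z), for a distribution p on Y = V^L. -/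
open Classical in
noncomputable def prefixProb {V : Type*} [Fintype V] {L : ℕ}
    (p : (Fin L → V) → ℝ) (w : List V) : ℝ :=
  ∑ y : Fin L → V, if w <+: List.ofFn y then p y else 0

/- condProb p w t = p(t | w) = P(w·t prefix) / P(w prefix). -/
noncomputable def condProb {V : Type*} [Fintype V] {L : ℕ}
    (p : (Fin L → V) → ℝ) (w t : List V) : ℝ :=
  prefixProb p (w ++ t) / prefixProb p w

/- STATEMENT 3: if S is a set of conditional-probability queries (nonempty strings of length
≤ L) with |S| < |V|^L - 1, then there exist two probability distributions p, p' on Y = V^L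
agreeing with the uniform conditional 1/|V| on every queried string, whose sets of
maximum-probability sequences are disjoint. -/

open Finset


lemma card_prefix_aux {V : Type*} [Fintype V] [DecidableEq V] {L : ℕ} (w : List V)
    (hw : w.length ≤ L) :
    Nat.card {y : Fin L → V // w <+: List.ofFn y} = Fintype.card V ^ (L - w.length) := by
  classical
  have key : ∀ y : Fin L → V, (w <+: List.ofFn y) ↔
      (y ∘ Subtype.val : {i : Fin L // (i : ℕ) < w.length} → V)
        = fun i => w.get ⟨i.1.1, i.2⟩ := by
    intro y
    constructor
    · intro h
      funext i
      obtain ⟨⟨i, hiL⟩, hij⟩ := i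
      have := h.getElem (i := i) hij
      simpa [List.get_eq_getElem] using this.symm
    · intro h
      rw [List.prefix_iff_eq_take]
      apply List.ext_getElem
      · simp [hw]
      · intro i h1 h2
        have := congrFun h ⟨⟨i, lt_of_lt_of_le h1 hw⟩, h1⟩
        simp only [Function.comp_apply, List.get_eq_getElem] at this
        simp [this]
  calc Nat.card {y : Fin L → V // w <+: List.ofFn y}
      = Nat.card {y : Fin L → V //
          (y ∘ Subtype.val : {i : Fin L // (i : ℕ) < w.length} → V)
            = fun i => w.get ⟨i.1.1, i.2⟩} :=
        Nat.card_congr (Equiv.subtypeEquivRight key)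
    _ = Nat.card ({i : Fin L // ¬ (i : ℕ) < w.length} → V) :=
        Nat.card_congr (Equiv.subtypePreimage _ _)
    _ = Fintype.card V ^ (L - w.length) := by
        rw [Nat.card_eq_fintype_card, Fintype.card_fun]
        congr 1
        rw [Fintype.card_subtype_compl]
        have : Fintype.card {i : Fin L // (i : ℕ) < w.length} = w.length :=
          Fintype.card_congr
            { toFun := fun i => (⟨i.1.1, i.2⟩ : Fin w.length)
              invFun := fun k => ⟨⟨k, lt_of_lt_of_le k.2 hw⟩, k.2⟩
              left_inv := fun i => rfl
              right_inv := fun k => rfl } |>.trans (Fintype.card_fin _)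
        rw [this, Fintype.card_fin]


lemma sum_ite_card {α : Type*} [Fintype α] (P : α → Prop) [DecidablePred P] (c : ℝ) :
    (∑ y : α, if P y then c else 0) = (Nat.card {y // P y} : ℝ) * c := by
  rw [Nat.card_eq_fintype_card, Fintype.card_subtype, ← Finset.sum_filter,
    Finset.sum_const, nsmul_eq_mul]

lemma prefixProb_add {V : Type*} [Fintype V] {L : ℕ} (a b : (Fin L → V) → ℝ) (w : List V) :
    prefixProb (fun y => a y + b y) w = prefixProb a w + prefixProb b w := by
  rw [prefixProb, prefixProb, prefixProb, ← Finset.sum_add_distrib]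
  exact Finset.sum_congr rfl fun y _ => by split_ifs <;> simp

lemma prefixProb_smul {V : Type*} [Fintype V] {L : ℕ} (c : ℝ) (a : (Fin L → V) → ℝ)
    (w : List V) : prefixProb (fun y => c * a y) w = c * prefixProb a w := by
  rw [prefixProb, prefixProb, Finset.mul_sum]
  exact Finset.sum_congr rfl fun y _ => by split_ifs <;> simp

lemma prefixProb_const {V : Type*} [Fintype V] [DecidableEq V] {L : ℕ} (c : ℝ) (w : List V)
    (hw : w.length ≤ L) :
    prefixProb (fun _ : Fin L → V => c) w = (Fintype.card V : ℝ) ^ (L - w.length) * c := by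
  rw [prefixProb]
  refine (@sum_ite_card (Fin L → V) _ (fun y => w <+: List.ofFn y)
    (fun y => @List.instDecidableIsPrefixOfDecidableEq V
      (fun a b => Classical.propDecidable (a = b)) w (List.ofFn y)) c).trans ?_
  rw [card_prefix_aux w hw, Nat.cast_pow]

lemma aux_dist {V : Type*} [Fintype V] [DecidableEq V] (hV : 2 ≤ Fintype.card V) {L : ℕ}
    (hL : 1 ≤ L) (d : (Fin L → V) → ℝ) (r : ℝ)
    (habs : ∀ y, |r * d y| ≤ ((Fintype.card V : ℝ) ^ L)⁻¹ / 2)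
    (hsum : ∑ y, d y = 0) :
    (∀ y, ((Fintype.card V : ℝ) ^ L)⁻¹ / 2 ≤
        (fun y => ((Fintype.card V : ℝ) ^ L)⁻¹ + r * d y) y) ∧
    (∑ y, (fun y => ((Fintype.card V : ℝ) ^ L)⁻¹ + r * d y) y = 1) ∧
    (∀ w : List V, w.length < L →
        0 < prefixProb (fun y => ((Fintype.card V : ℝ) ^ L)⁻¹ + r * d y) w) ∧
    (∀ (w : List V) (u : V), w.length + 1 ≤ L →
        prefixProb d (w ++ [u]) = (Fintype.card V : ℝ)⁻¹ * prefixProb d w →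
        condProb (fun y => ((Fintype.card V : ℝ) ^ L)⁻¹ + r * d y) w [u]
          = 1 / (Fintype.card V : ℝ)) := by
  classical
  set n : ℕ := Fintype.card V with hn
  set u0 : ℝ := ((n : ℝ) ^ L)⁻¹ with hu0def
  set q : (Fin L → V) → ℝ := fun y => u0 + r * d y with hqdef
  have hnR : (0 : ℝ) < (n : ℝ) := by
    have : 0 < n := by omega
    exact_mod_cast this
  have hnR' : (n : ℝ) ≠ 0 := ne_of_gt hnR
  have hu0 : 0 < u0 := by positivity
  have hq : ∀ y, u0 / 2 ≤ q y := by
    intro y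
    have h1 := habs y
    have h2 := neg_abs_le (r * d y)
    simp only [hqdef]
    linarith
  have hdec : ∀ x : List V, x.length ≤ L →
      prefixProb q x = (n : ℝ) ^ (L - x.length) * u0 + r * prefixProb d x := by
    intro x hx
    have h1 : prefixProb q x = prefixProb (fun _ : Fin L → V => u0) x + r * prefixProb d x := by
      rw [prefixProb, prefixProb, prefixProb, Finset.mul_sum, ← Finset.sum_add_distrib]
      exact Finset.sum_congr rfl fun y _ => by split_ifs <;> simp [hqdef]
    rw [h1, prefixProb_const u0 x hx]
  have hpos : ∀ w : List V, w.length ≤ L → 0 < prefixProb q w := by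
    intro w hw
    have hcardw := card_prefix_aux (L := L) w hw
    have hne : Nonempty {y : Fin L → V // w <+: List.ofFn y} := by
      have h0 : Nat.card {y : Fin L → V // w <+: List.ofFn y} ≠ 0 := by
        rw [hcardw]
        positivity
      exact (Nat.card_ne_zero.mp h0).1
    obtain ⟨y1, hy1⟩ := hne
    rw [prefixProb]
    apply Finset.sum_pos'
    · intro y _
      split_ifs with h
      · have h2 := hq y
        simp only [hqdef] at h2 ⊢
        linarith
      · exact le_refl 0
    · refine ⟨y1, Finset.mem_univ _, ?_⟩
      rw [if_pos hy1]
      have h2 := hq y1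
      simp only [hqdef] at h2 ⊢
      linarith
  have hsumq : ∑ y, q y = 1 := by
    have hcardY : (Fintype.card (Fin L → V) : ℝ) = (n : ℝ) ^ L := by
      rw [Fintype.card_fun, Fintype.card_fin, Nat.cast_pow]
    calc ∑ y, q y = (∑ _y : Fin L → V, u0) + r * ∑ y, d y := by
          rw [Finset.mul_sum, ← Finset.sum_add_distrib]
      _ = 1 := by
          rw [hsum, Finset.sum_const, Finset.card_univ, nsmul_eq_mul, hcardY, mul_zero,
            add_zero, hu0def, mul_inv_cancel₀ (by positivity)]
  refine ⟨hq, hsumq, fun w hw => hpos w hw.le, ?_⟩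
  intro w u hlen hker
  have hqw := hdec w (by omega)
  have hlenwu : (w ++ [u]).length = w.length + 1 := by simp
  have hqwu := hdec (w ++ [u]) (by omega)
  have hApos := hpos w (by omega)
  have hstep : prefixProb q (w ++ [u]) = prefixProb q w / (n : ℝ) := by
    rw [hqwu, hker, hqw, hlenwu]
    have hexp : L - w.length = (L - (w.length + 1)) + 1 := by omega
    rw [hexp, pow_succ]
    field_simp
  rw [condProb, hstep, div_div, mul_comm, ← div_div, div_self (ne_of_gt hApos)]

theorem stmt3 {V : Type*} [Fintype V] [DecidableEq V] (hV : 2 ≤ Fintype.card V)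
    {L : ℕ} (hL : 1 ≤ L) (S : Finset (List V))
    (hS : ∀ s ∈ S, 1 ≤ s.length ∧ s.length ≤ L)
    (hcard : S.card < Fintype.card V ^ L - 1) :
    ∃ p p' : (Fin L → V) → ℝ,
      (∀ y, 0 ≤ p y) ∧ (∑ y, p y = 1) ∧
      (∀ y, 0 ≤ p' y) ∧ (∑ y, p' y = 1) ∧
      (∀ (w : List V) (u : V), (w ++ [u]) ∈ S →
        0 < prefixProb p w ∧ 0 < prefixProb p' w ∧
        condProb p w [u] = 1 / (Fintype.card V : ℝ) ∧
        condProb p' w [u] = 1 / (Fintype.card V : ℝ)) ∧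
      (∀ y y' : Fin L → V,
        (∀ z, p z ≤ p y) → (∀ z, p' z ≤ p' y') → y ≠ y') := by
  classical
  have hnR : (0 : ℝ) < (Fintype.card V : ℝ) := by
    have : 0 < Fintype.card V := by omega
    exact_mod_cast this
  -- the constraint linear map
  let f : ((Fin L → V) → ℝ) →ₗ[ℝ] ((↥S → ℝ) × ℝ) :=
    { toFun := fun d =>
        (fun s => prefixProb d (s : List V)
          - (Fintype.card V : ℝ)⁻¹ * prefixProb d ((s : List V).dropLast), ∑ y, d y)
      map_add' := fun a b => by
        have ha : (a + b) = fun y => a y + b y := rfl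
        refine Prod.ext ?_ ?_
        · funext s
          simp only [ha, prefixProb_add, Prod.fst_add, Pi.add_apply]
          ring
        · simp only [ha, Prod.snd_add]
          rw [← Finset.sum_add_distrib]
      map_smul' := fun c a => by
        have ha : (c • a) = fun y => c * a y := rfl
        refine Prod.ext ?_ ?_
        · funext s
          simp only [ha, prefixProb_smul, RingHom.id_apply, Prod.smul_fst, Pi.smul_apply,
            smul_eq_mul]
          ring
        · simp only [ha, RingHom.id_apply, Prod.smul_snd, smul_eq_mul]
          rw [Finset.mul_sum] }
  -- dimension count gives a nonzero kernel element
  have hdim1 : Module.finrank ℝ ((Fin L → V) → ℝ) = Fintype.card V ^ L := by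
    rw [Module.finrank_fintype_fun_eq_card, Fintype.card_fun, Fintype.card_fin]
  have hdim2 : Module.finrank ℝ ((↥S → ℝ) × ℝ) = S.card + 1 := by
    rw [Module.finrank_prod, Module.finrank_fintype_fun_eq_card, Module.finrank_self,
      Fintype.card_coe]
  have hrank := LinearMap.finrank_range_add_finrank_ker f
  have hle : Module.finrank ℝ (LinearMap.range f) ≤ S.card + 1 :=
    hdim2 ▸ Submodule.finrank_le _
  have h2L : 2 ≤ Fintype.card V ^ L := by
    calc 2 ≤ Fintype.card V := hV
      _ = Fintype.card V ^ 1 := (pow_one _).symm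
      _ ≤ Fintype.card V ^ L := Nat.pow_le_pow_right (by omega) hL
  have hkerpos : 0 < Module.finrank ℝ (LinearMap.ker f) := by
    rw [hdim1] at hrank
    omega
  obtain ⟨dd, hdd⟩ := Module.finrank_pos_iff_exists_ne_zero.mp hkerpos
  set d : (Fin L → V) → ℝ := (dd : (Fin L → V) → ℝ) with hddef
  have hd0 : d ≠ 0 := fun h => hdd (by exact_mod_cast Submodule.coe_eq_zero.mp h)
  have hfd : f d = 0 := (LinearMap.mem_ker).mp dd.2
  have hC : ∀ s : ↥S, prefixProb d (s : List V)
      - (Fintype.card V : ℝ)⁻¹ * prefixProb d ((s : List V).dropLast) = 0 :=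
    fun s => congrFun (congrArg Prod.fst hfd) s
  have hsum : ∑ y, d y = 0 := congrArg Prod.snd hfd
  -- the maximal absolute value of d
  have hVne : Nonempty V := Fintype.card_pos_iff.mp (by omega)
  have hYne : Nonempty (Fin L → V) := ⟨fun _ => hVne.some⟩
  obtain ⟨y₀, -, hy₀⟩ := Finset.exists_max_image Finset.univ (fun y => |d y|)
    ⟨hYne.some, Finset.mem_univ _⟩
  set M : ℝ := |d y₀| with hMdef
  have hM : ∀ z, |d z| ≤ M := fun z => hy₀ z (Finset.mem_univ z)
  obtain ⟨z₀, hz₀⟩ : ∃ z, d z ≠ 0 := by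
    by_contra h
    push_neg at h
    exact hd0 (funext fun z => h z)
  have hMpos : 0 < M := lt_of_lt_of_le (abs_pos.mpr hz₀) (hM z₀)
  set u0 : ℝ := ((Fintype.card V : ℝ) ^ L)⁻¹ with hu0def
  have hu0 : 0 < u0 := by positivity
  set t : ℝ := u0 / (2 * M) with htdef
  have ht : 0 < t := by positivity
  have habs : ∀ y, |t * d y| ≤ u0 / 2 := by
    intro y
    rw [abs_mul, abs_of_pos ht]
    calc t * |d y| ≤ t * M := by nlinarith [hM y]
      _ = u0 / 2 := by
          rw [htdef, div_mul_eq_mul_div, div_eq_div_iff (mul_pos two_pos hMpos).ne' two_ne_zero]; ring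
  have habs' : ∀ y, |(-t) * d y| ≤ u0 / 2 := by
    intro y
    rw [neg_mul, abs_neg]
    exact habs y
  obtain ⟨hq1, hq2, hq3, hq4⟩ := aux_dist hV hL d t habs hsum
  obtain ⟨hq1', hq2', hq3', hq4'⟩ := aux_dist hV hL d (-t) habs' hsum
  refine ⟨fun y => u0 + t * d y, fun y => u0 + (-t) * d y, ?_, hq2, ?_, hq2', ?_, ?_⟩
  · intro y; have := hq1 y; simp only at this ⊢; linarith
  · intro y; have := hq1' y; simp only at this ⊢; linarith
  · intro w u hwu
    obtain ⟨hs1, hs2⟩ := hS _ hwu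
    have hlen : w.length + 1 ≤ L := by
      simpa using hs2
    have hdl : (w ++ [u]).dropLast = w := by simp
    have hCd : prefixProb d (w ++ [u])
        = (Fintype.card V : ℝ)⁻¹ * prefixProb d w := by
      have := hC ⟨w ++ [u], hwu⟩
      simp only [hdl] at this
      linarith
    exact ⟨hq3 w (by omega), hq3' w (by omega), hq4 w u hlen hCd, hq4' w u hlen hCd⟩
  · intro y y' hy hy' heq
    obtain ⟨zp, hzp⟩ : ∃ z, 0 < d z := by
      by_contra h
      push_neg at h
      have : (∑ y, d y) < ∑ y : Fin L → V, (0 : ℝ) :=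
        Finset.sum_lt_sum (fun i _ => h i)
          ⟨z₀, Finset.mem_univ _, lt_of_le_of_ne (h z₀) hz₀⟩
      simp [hsum] at this
    obtain ⟨zm, hzm⟩ : ∃ z, d z < 0 := by
      by_contra h
      push_neg at h
      have : (∑ y : Fin L → V, (0:ℝ)) < ∑ y, d y :=
        Finset.sum_lt_sum (fun i _ => h i)
          ⟨z₀, Finset.mem_univ _, lt_of_le_of_ne (h z₀) (Ne.symm hz₀)⟩
      simp [hsum] at this
    have h1 : d zp ≤ d y := by
      have h := hy zp
      simp only at h
      have h' : t * d zp ≤ t * d y := by linarith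
      exact le_of_mul_le_mul_left h' ht
    have h2 : d y' ≤ d zm := by
      have h := hy' zm
      simp only at h
      have h' : t * d y' ≤ t * d zm := by linarith
      exact le_of_mul_le_mul_left h' ht
    rw [heq] at h1
    linarith
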